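/- Define ψ₂ : (0,π) × (0,∞) → ℝ by ψ₂(x,y) = arccos(−cos x / cosh y). Then on (0,π) × (0,∞): (i) ψ₂ is spacelike, i.e. (∂ψ₂/∂x)² + (∂ψ₂/∂y)² < 1; (ii) ψ₂ satisfies the maximal surface equation (1 − ψ_y²)ψ_xx + 2ψ_xψ_yψ_xy + (1 − ψ_x²)ψ_yy = 0; (iii) the graph of ψ₂ lies on 𝒮₂, i.e. cos(ψ₂(x,y))·cosh y + cos x = 0. -/

import Mathlib

/-- Partial derivative in the first variable. -/
noncomputable def px (ψ : ℝ → ℝ → ℝ) (x y : ℝ) : ℝ := deriv (fun x' => ψ x' y) x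

/-- Partial derivative in the second variable. -/
noncomputable def py (ψ : ℝ → ℝ → ℝ) (x y : ℝ) : ℝ := deriv (fun y' => ψ x y') y

/-- The graphing function of one sheet of `𝒮₂ = {cos t cosh y + cos x = 0}`. -/
noncomputable def ψ₂ (x y : ℝ) : ℝ := Real.arccos (-Real.cos x / Real.cosh y)

open Real in
lemma ψ₂_core_x (x y : ℝ) (h : Real.cos x ^ 2 < Real.cosh y ^ 2) :
    HasDerivAt (fun x' => ψ₂ x' y) (-(Real.sin x / Real.sqrt (Real.sin x ^ 2 + Real.sinh y ^ 2))) x := by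
  have hc : (0:ℝ) < Real.cosh y := Real.cosh_pos y
  have hEpos : 0 < Real.sin x ^ 2 + Real.sinh y ^ 2 := by
    nlinarith [Real.sin_sq_add_cos_sq x, Real.cosh_sq y]
  have hu : HasDerivAt (fun x' => -Real.cos x' / Real.cosh y) (Real.sin x / Real.cosh y) x := by
    simpa using ((Real.hasDerivAt_cos x).neg.div_const (Real.cosh y))
  have habs : |(-Real.cos x / Real.cosh y)| < 1 := by
    rw [abs_div, abs_neg, abs_of_pos hc, div_lt_one hc]
    nlinarith [abs_nonneg (Real.cos x), sq_abs (Real.cos x), sq_abs (Real.cosh y), abs_of_pos hc]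
  have h1 : -Real.cos x / Real.cosh y ≠ -1 := by intro hh; rw [hh] at habs; simp at habs
  have h2 : -Real.cos x / Real.cosh y ≠ 1 := by intro hh; rw [hh] at habs; simp at habs
  have h3 := (Real.hasDerivAt_arccos h1 h2).comp x hu
  have hE : 1 - (-Real.cos x / Real.cosh y) ^ 2 = (Real.sin x ^ 2 + Real.sinh y ^ 2) / Real.cosh y ^ 2 := by
    field_simp
    nlinarith [Real.sin_sq_add_cos_sq x, Real.cosh_sq y]
  have h4 : -(1 / √(1 - (-Real.cos x / Real.cosh y) ^ 2)) * (Real.sin x / Real.cosh y)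
      = -(Real.sin x / Real.sqrt (Real.sin x ^ 2 + Real.sinh y ^ 2)) := by
    have hsE : Real.sqrt (Real.sin x ^ 2 + Real.sinh y ^ 2) ≠ 0 := by positivity
    rw [hE, Real.sqrt_div hEpos.le, Real.sqrt_sq hc.le]
    field_simp
  rw [h4] at h3
  exact h3

open Real in
lemma ψ₂_core_y (x y : ℝ) (h : Real.cos x ^ 2 < 1) :
    HasDerivAt (fun y' => ψ₂ x y')
      (-(Real.cos x * Real.sinh y / (Real.cosh y * Real.sqrt (Real.sin x ^ 2 + Real.sinh y ^ 2)))) y := by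
  have hc : (0:ℝ) < Real.cosh y := Real.cosh_pos y
  have hc1 : (1:ℝ) ≤ Real.cosh y := Real.one_le_cosh y
  have hEpos : 0 < Real.sin x ^ 2 + Real.sinh y ^ 2 := by
    nlinarith [Real.sin_sq_add_cos_sq x, Real.cosh_sq y]
  have hsE : Real.sqrt (Real.sin x ^ 2 + Real.sinh y ^ 2) ≠ 0 := by positivity
  have hu : HasDerivAt (fun y' => -Real.cos x / Real.cosh y')
      (Real.cos x * Real.sinh y / Real.cosh y ^ 2) y := by
    have := (hasDerivAt_const y (-Real.cos x)).div (Real.hasDerivAt_cosh y) hc.ne'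
    refine this.congr_deriv (Eq.symm ?_)
    field_simp
    ring
  have habs : |(-Real.cos x / Real.cosh y)| < 1 := by
    rw [abs_div, abs_neg, abs_of_pos hc, div_lt_one hc]
    nlinarith [abs_nonneg (Real.cos x), sq_abs (Real.cos x)]
  have h1 : -Real.cos x / Real.cosh y ≠ -1 := by intro hh; rw [hh] at habs; simp at habs
  have h2 : -Real.cos x / Real.cosh y ≠ 1 := by intro hh; rw [hh] at habs; simp at habs
  have h3 := (Real.hasDerivAt_arccos h1 h2).comp y hu
  have hE : 1 - (-Real.cos x / Real.cosh y) ^ 2 = (Real.sin x ^ 2 + Real.sinh y ^ 2) / Real.cosh y ^ 2 := by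
    field_simp
    nlinarith [Real.sin_sq_add_cos_sq x, Real.cosh_sq y]
  have h4 : -(1 / √(1 - (-Real.cos x / Real.cosh y) ^ 2)) * (Real.cos x * Real.sinh y / Real.cosh y ^ 2)
      = -(Real.cos x * Real.sinh y / (Real.cosh y * Real.sqrt (Real.sin x ^ 2 + Real.sinh y ^ 2))) := by
    rw [hE, Real.sqrt_div hEpos.le, Real.sqrt_sq hc.le]
    field_simp
  rw [h4] at h3
  exact h3

lemma ψ₂_core_xx (x y : ℝ) (hy : 0 < y) :
    HasDerivAt (fun x' => -(Real.sin x' / Real.sqrt (Real.sin x' ^ 2 + Real.sinh y ^ 2)))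
      (-(Real.cos x * Real.sinh y ^ 2 /
        (Real.sqrt (Real.sin x ^ 2 + Real.sinh y ^ 2) * (Real.sin x ^ 2 + Real.sinh y ^ 2)))) x := by
  have hsh : 0 < Real.sinh y := Real.sinh_pos_iff.2 hy
  have hEpos : 0 < Real.sin x ^ 2 + Real.sinh y ^ 2 := by positivity
  have hsE : Real.sqrt (Real.sin x ^ 2 + Real.sinh y ^ 2) ≠ 0 := by positivity
  have hsq : Real.sqrt (Real.sin x ^ 2 + Real.sinh y ^ 2) ^ 2 = Real.sin x ^ 2 + Real.sinh y ^ 2 :=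
    Real.sq_sqrt hEpos.le
  have hinner : HasDerivAt (fun x' => Real.sin x' ^ 2 + Real.sinh y ^ 2)
      (2 * Real.sin x ^ 1 * Real.cos x) x := ((Real.hasDerivAt_sin x).pow 2).add_const _
  have hsqrt : HasDerivAt (fun x' => Real.sqrt (Real.sin x' ^ 2 + Real.sinh y ^ 2))
      (1 / (2 * Real.sqrt (Real.sin x ^ 2 + Real.sinh y ^ 2)) * (2 * Real.sin x ^ 1 * Real.cos x)) x :=
    (Real.hasDerivAt_sqrt hEpos.ne').comp x hinner
  have hdiv := ((Real.hasDerivAt_sin x).div hsqrt hsE).neg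
  refine hdiv.congr_deriv (Eq.symm ?_)
  set s := Real.sqrt (Real.sin x ^ 2 + Real.sinh y ^ 2) with hs
  have h2 : Real.sinh y ^ 2 = s ^ 2 - Real.sin x ^ 2 := by rw [hsq]; ring
  have hsne : s ≠ 0 := hsE
  rw [h2]
  field_simp
  ring

lemma ψ₂_core_xy (x y : ℝ) (hx : Real.cos x ^ 2 < 1) :
    HasDerivAt (fun y' => -(Real.sin x / Real.sqrt (Real.sin x ^ 2 + Real.sinh y' ^ 2)))
      (Real.sin x * Real.sinh y * Real.cosh y /
        (Real.sqrt (Real.sin x ^ 2 + Real.sinh y ^ 2) * (Real.sin x ^ 2 + Real.sinh y ^ 2))) y := by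
  have hEpos : 0 < Real.sin x ^ 2 + Real.sinh y ^ 2 := by
    nlinarith [Real.sin_sq_add_cos_sq x, sq_nonneg (Real.sinh y)]
  have hsE : Real.sqrt (Real.sin x ^ 2 + Real.sinh y ^ 2) ≠ 0 := by positivity
  have hsq : Real.sqrt (Real.sin x ^ 2 + Real.sinh y ^ 2) ^ 2 = Real.sin x ^ 2 + Real.sinh y ^ 2 :=
    Real.sq_sqrt hEpos.le
  have hinner : HasDerivAt (fun y' => Real.sin x ^ 2 + Real.sinh y' ^ 2)
      (2 * Real.sinh y ^ 1 * Real.cosh y) y := ((Real.hasDerivAt_sinh y).pow 2).const_add _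
  have hsqrt : HasDerivAt (fun y' => Real.sqrt (Real.sin x ^ 2 + Real.sinh y' ^ 2))
      (1 / (2 * Real.sqrt (Real.sin x ^ 2 + Real.sinh y ^ 2)) * (2 * Real.sinh y ^ 1 * Real.cosh y)) y :=
    (Real.hasDerivAt_sqrt hEpos.ne').comp y hinner
  have hdiv := ((hasDerivAt_const y (Real.sin x)).div hsqrt hsE).neg
  refine hdiv.congr_deriv (Eq.symm ?_)
  set s := Real.sqrt (Real.sin x ^ 2 + Real.sinh y ^ 2) with hs
  have h2 : Real.sinh y ^ 2 = s ^ 2 - Real.sin x ^ 2 := by rw [hsq]; ring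
  have hsne : s ≠ 0 := hsE
  rw [h2]
  field_simp
  ring

lemma ψ₂_core_yy (x y : ℝ) (hx : Real.cos x ^ 2 < 1) :
    HasDerivAt (fun y' => -(Real.cos x * Real.sinh y' /
        (Real.cosh y' * Real.sqrt (Real.sin x ^ 2 + Real.sinh y' ^ 2))))
      (-(Real.cos x * (Real.sin x ^ 2 - Real.sinh y ^ 4) /
        (Real.cosh y ^ 2 * (Real.sqrt (Real.sin x ^ 2 + Real.sinh y ^ 2) * (Real.sin x ^ 2 + Real.sinh y ^ 2))))) y := by
  have hc : (0:ℝ) < Real.cosh y := Real.cosh_pos y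
  have hEpos : 0 < Real.sin x ^ 2 + Real.sinh y ^ 2 := by
    nlinarith [Real.sin_sq_add_cos_sq x, sq_nonneg (Real.sinh y)]
  have hsE : Real.sqrt (Real.sin x ^ 2 + Real.sinh y ^ 2) ≠ 0 := by positivity
  have hsq : Real.sqrt (Real.sin x ^ 2 + Real.sinh y ^ 2) ^ 2 = Real.sin x ^ 2 + Real.sinh y ^ 2 :=
    Real.sq_sqrt hEpos.le
  have hinner : HasDerivAt (fun y' => Real.sin x ^ 2 + Real.sinh y' ^ 2)
      (2 * Real.sinh y ^ 1 * Real.cosh y) y := ((Real.hasDerivAt_sinh y).pow 2).const_add _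
  have hsqrt : HasDerivAt (fun y' => Real.sqrt (Real.sin x ^ 2 + Real.sinh y' ^ 2))
      (1 / (2 * Real.sqrt (Real.sin x ^ 2 + Real.sinh y ^ 2)) * (2 * Real.sinh y ^ 1 * Real.cosh y)) y :=
    (Real.hasDerivAt_sqrt hEpos.ne').comp y hinner
  have hnum : HasDerivAt (fun y' => Real.cos x * Real.sinh y') (Real.cos x * Real.cosh y) y :=
    (Real.hasDerivAt_sinh y).const_mul _
  have hden := (Real.hasDerivAt_cosh y).mul hsqrt
  have hdenne : Real.cosh y * Real.sqrt (Real.sin x ^ 2 + Real.sinh y ^ 2) ≠ 0 :=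
    mul_ne_zero hc.ne' hsE
  have hdiv := (hnum.div hden hdenne).neg
  refine hdiv.congr_deriv (Eq.symm ?_)
  simp only [Pi.mul_apply]
  set s := Real.sqrt (Real.sin x ^ 2 + Real.sinh y ^ 2) with hs
  have h2 : Real.sinh y ^ 2 = s ^ 2 - Real.sin x ^ 2 := by rw [hsq]; ring
  have h4 : Real.sinh y ^ 4 = (s ^ 2 - Real.sin x ^ 2) ^ 2 := by rw [← h2]; ring
  have hc2 : Real.cosh y ^ 2 = Real.sinh y ^ 2 + 1 := Real.cosh_sq y
  have hsne : s ≠ 0 := hsE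
  rw [← hsq, hc2]
  field_simp
  ring_nf
  linear_combination (Real.cos x * Real.cosh y ^ 2) * hsq + (Real.cos x * s ^ 2 * Real.sinh y ^ 2) * hc2

/-- On `(0, π) × (0, ∞)`, the function `ψ₂` is spacelike, satisfies the maximal
surface equation, and its graph lies on `𝒮₂`. -/
theorem ψ₂_maximal_graph :
    ∀ x ∈ Set.Ioo (0 : ℝ) Real.pi, ∀ y ∈ Set.Ioi (0 : ℝ),
      (px ψ₂ x y) ^ 2 + (py ψ₂ x y) ^ 2 < 1 ∧
      (1 - (py ψ₂ x y) ^ 2) * px (px ψ₂) x y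
        + 2 * px ψ₂ x y * py ψ₂ x y * py (px ψ₂) x y
        + (1 - (px ψ₂ x y) ^ 2) * py (py ψ₂) x y = 0 ∧
      Real.cos (ψ₂ x y) * Real.cosh y + Real.cos x = 0 := by
  rintro x ⟨hx0, hxpi⟩ y hy
  rw [Set.mem_Ioi] at hy
  have hsx : 0 < Real.sin x := Real.sin_pos_of_pos_of_lt_pi hx0 hxpi
  have hpyth := Real.sin_sq_add_cos_sq x
  have hcx : Real.cos x ^ 2 < 1 := by nlinarith
  have hc : (0:ℝ) < Real.cosh y := Real.cosh_pos y
  have hc2 : Real.cosh y ^ 2 = Real.sinh y ^ 2 + 1 := Real.cosh_sq y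
  have hsh : 0 < Real.sinh y := Real.sinh_pos_iff.2 hy
  have hccy : ∀ y' : ℝ, Real.cos x ^ 2 < Real.cosh y' ^ 2 := fun y' => by
    nlinarith [Real.cosh_sq y', sq_nonneg (Real.sinh y')]
  have hccx : ∀ x' : ℝ, Real.cos x' ^ 2 < Real.cosh y ^ 2 := fun x' => by
    nlinarith [Real.sin_sq_add_cos_sq x', Real.cosh_sq y, sq_nonneg (Real.sinh y), sq_nonneg (Real.sin x')]
  have hEpos : 0 < Real.sin x ^ 2 + Real.sinh y ^ 2 := by positivity
  set s := Real.sqrt (Real.sin x ^ 2 + Real.sinh y ^ 2) with hs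
  have hsq : s ^ 2 = Real.sin x ^ 2 + Real.sinh y ^ 2 := Real.sq_sqrt hEpos.le
  have hspos : 0 < s := Real.sqrt_pos.2 hEpos
  have hsne : s ≠ 0 := hspos.ne'
  -- first derivatives
  have hpx : px ψ₂ x y = -(Real.sin x / s) := (ψ₂_core_x x y (hccx x)).deriv
  have hpy : py ψ₂ x y = -(Real.cos x * Real.sinh y / (Real.cosh y * s)) :=
    (ψ₂_core_y x y hcx).deriv
  -- second derivatives
  have hfx : (fun x' => px ψ₂ x' y) = fun x' => -(Real.sin x' / Real.sqrt (Real.sin x' ^ 2 + Real.sinh y ^ 2)) :=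
    funext fun x' => (ψ₂_core_x x' y (hccx x')).deriv
  have hfy : (fun y' => px ψ₂ x y') = fun y' => -(Real.sin x / Real.sqrt (Real.sin x ^ 2 + Real.sinh y' ^ 2)) :=
    funext fun y' => (ψ₂_core_x x y' (hccy y')).deriv
  have hgy : (fun y' => py ψ₂ x y') = fun y' => -(Real.cos x * Real.sinh y' /
      (Real.cosh y' * Real.sqrt (Real.sin x ^ 2 + Real.sinh y' ^ 2))) :=
    funext fun y' => (ψ₂_core_y x y' hcx).deriv
  have hpxx : px (px ψ₂) x y = -(Real.cos x * Real.sinh y ^ 2 / (s * (Real.sin x ^ 2 + Real.sinh y ^ 2))) := by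
    show deriv (fun x' => px ψ₂ x' y) x = _
    rw [hfx]
    exact (ψ₂_core_xx x y hy).deriv
  have hpxy : py (px ψ₂) x y = Real.sin x * Real.sinh y * Real.cosh y / (s * (Real.sin x ^ 2 + Real.sinh y ^ 2)) := by
    show deriv (fun y' => px ψ₂ x y') y = _
    rw [hfy]
    exact (ψ₂_core_xy x y hcx).deriv
  have hpyy : py (py ψ₂) x y = -(Real.cos x * (Real.sin x ^ 2 - Real.sinh y ^ 4) /
      (Real.cosh y ^ 2 * (s * (Real.sin x ^ 2 + Real.sinh y ^ 2)))) := by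
    show deriv (fun y' => py ψ₂ x y') y = _
    rw [hgy]
    exact (ψ₂_core_yy x y hcx).deriv
  refine ⟨?_, ?_, ?_⟩
  · rw [hpx, hpy]
    have key : (-(Real.sin x / s)) ^ 2 + (-(Real.cos x * Real.sinh y / (Real.cosh y * s))) ^ 2
        = 1 / Real.cosh y ^ 2 := by
      field_simp
      linear_combination (Real.sinh y ^ 2) * hpyth
        + (Real.sin x ^ 2) * hc2
        - hsq
    rw [key, div_lt_one (by positivity)]
    nlinarith
  · rw [hpx, hpy, hpxx, hpxy, hpyy, ← hsq]
    field_simp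
    linear_combination (Real.cos x * Real.sinh y ^ 4) * hpyth
      + (Real.cos x * Real.sinh y ^ 2 * (Real.sin x ^ 2 - Real.sinh y ^ 2)) * hc2
      + (Real.cos x * (-(Real.sinh y ^ 2 * Real.cosh y ^ 2) - Real.sin x ^ 2 + Real.sinh y ^ 4)) * hsq
  · show Real.cos (Real.arccos (-Real.cos x / Real.cosh y)) * Real.cosh y + Real.cos x = 0
    rw [Real.cos_arccos]
    · field_simp
      ring
    · rw [le_div_iff₀ hc]
      nlinarith [Real.cos_le_one x, Real.one_le_cosh y]
    · rw [div_le_iff₀ hc]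
      nlinarith [Real.neg_one_le_cos x, Real.one_le_cosh y]
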